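/- Let p > 5 be a prime. Then 10 · ∑_{s=0}^{p-1} (-1)^s · ∑_{t=0}^{p-1} 2^t · binom(2s, p+t) ≡ 3(1 − (-1)^{(p-1)/2}) (mod p). -/

import Mathlib

lemma lucas_aux (p n k : ℕ) (hp : p.Prime) (hn : n < p) (hk : k < p) :
    (((p + n).choose (p + k) : ZMod p)) = (n.choose k : ZMod p) := by
  haveI : Fact p.Prime := ⟨hp⟩
  have h := Choose.choose_modEq_choose_mod_mul_choose_div (p := p) (n := p + n) (k := p + k)
  have h1 : (p + n) % p = n := by rw [Nat.add_mod_left]; exact Nat.mod_eq_of_lt hn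
  have h1' : (p + k) % p = k := by rw [Nat.add_mod_left]; exact Nat.mod_eq_of_lt hk
  have h2 : (p + n) / p = 1 := by
    rw [Nat.add_div_left _ hp.pos, Nat.div_eq_of_lt hn]
  have h2' : (p + k) / p = 1 := by
    rw [Nat.add_div_left _ hp.pos, Nat.div_eq_of_lt hk]
  rw [h1, h1', h2, h2'] at h
  rw [← ZMod.intCast_eq_intCast_iff] at h
  push_cast at h
  simpa using h

lemma binom_aux (p n : ℕ) (hn : n < p) :
    ∑ t ∈ Finset.range p, (2 : ZMod p) ^ t * (n.choose t : ZMod p) = 3 ^ n := by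
  rw [← Finset.sum_subset (Finset.range_subset_range.mpr hn)
    (fun t _ ht => by
      rw [Nat.choose_eq_zero_of_lt (by simpa using ht), Nat.cast_zero, mul_zero])]
  have h3 : (3 : ZMod p) = 2 + 1 := by norm_num
  rw [h3, add_pow]
  simp

theorem stmt_10 (p : ℕ) (hp : p.Prime) (h5 : 5 < p) :
    (10 * ∑ s ∈ Finset.range p,
        (-1 : ℤ) ^ s * ∑ t ∈ Finset.range p, 2 ^ t * ((2 * s).choose (p + t) : ℤ)) ≡
      3 * (1 - (-1) ^ ((p - 1) / 2)) [ZMOD (p : ℤ)] := by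
  haveI : Fact p.Prime := ⟨hp⟩
  obtain ⟨m, hm⟩ : Odd p := hp.odd_of_ne_two (by omega)
  rw [← ZMod.intCast_eq_intCast_iff]
  push_cast
  have h12 : (p - 1) / 2 = m := by omega
  rw [h12]
  -- split the outer sum
  rw [Finset.range_eq_Ico, ← Finset.sum_Ico_consecutive _ (Nat.zero_le (m + 1))
    (by omega : m + 1 ≤ p)]
  simp only [← Finset.range_eq_Ico]
  have hzero : ∑ s ∈ Finset.range (m + 1),
      (-1 : ZMod p) ^ s * ∑ t ∈ Finset.range p, 2 ^ t * ((2 * s).choose (p + t) : ZMod p) = 0 := by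
    apply Finset.sum_eq_zero
    intro s hs
    simp only [Finset.mem_range] at hs
    have : ∀ t ∈ Finset.range p, (2 : ZMod p) ^ t * ((2 * s).choose (p + t) : ZMod p) = 0 := by
      intro t _
      rw [Nat.choose_eq_zero_of_lt (by omega), Nat.cast_zero, mul_zero]
    rw [Finset.sum_congr rfl this, Finset.sum_const_zero, mul_zero]
  rw [hzero, zero_add]
  rw [Finset.sum_Ico_eq_sum_range]
  have hpm : p - (m + 1) = m := by omega
  rw [hpm]
  have hterm : ∀ u ∈ Finset.range m,
      (-1 : ZMod p) ^ (m + 1 + u) * ∑ t ∈ Finset.range p,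
        2 ^ t * ((2 * (m + 1 + u)).choose (p + t) : ZMod p)
      = ((-1) ^ (m + 1) * 3) * (-9 : ZMod p) ^ u := by
    intro u hu
    simp only [Finset.mem_range] at hu
    have hind : 2 * (m + 1 + u) = p + (2 * u + 1) := by omega
    rw [hind]
    have hinner : ∑ t ∈ Finset.range p,
        (2 : ZMod p) ^ t * ((p + (2 * u + 1)).choose (p + t) : ZMod p) = 3 ^ (2 * u + 1) := by
      rw [Finset.sum_congr rfl (fun t ht => by
        rw [lucas_aux p (2 * u + 1) t hp (by omega) (Finset.mem_range.mp ht)])]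
      exact binom_aux p (2 * u + 1) (by omega)
    rw [hinner]
    have h9 : (-9 : ZMod p) = (-1) * 3 ^ 2 := by norm_num
    rw [h9, mul_pow, pow_add ((-1) : ZMod p) (m + 1) u, pow_succ (3 : ZMod p) (2 * u), pow_mul]
    ring
  rw [Finset.sum_congr rfl hterm, ← Finset.mul_sum]
  -- geometric sum
  have hG := geom_sum_mul (-9 : ZMod p) m
  have hx : (-9 : ZMod p) ^ m = (-1) ^ m := by
    have h9 : (-9 : ZMod p) = (-1) * 3 ^ 2 := by norm_num
    have h3ne : (3 : ZMod p) ≠ 0 := by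
      intro h
      have : (p : ℕ) ∣ 3 := by
        have := (ZMod.natCast_eq_zero_iff 3 p).mp (by exact_mod_cast h)
        exact this
      have := Nat.le_of_dvd (by norm_num) this
      omega
    have hferm : (3 : ZMod p) ^ (p - 1) = 1 := ZMod.pow_card_sub_one_eq_one h3ne
    rw [h9, mul_pow, ← pow_mul]
    have : 2 * m = p - 1 := by omega
    rw [this, hferm, mul_one]
  rw [hx] at hG
  have hG' : (10 : ZMod p) * ∑ u ∈ Finset.range m, (-9 : ZMod p) ^ u = 1 - (-1) ^ m := by
    have h10 : (-9 : ZMod p) - 1 = -10 := by norm_num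
    rw [h10] at hG
    linear_combination -hG
  have hsq : ((-1 : ZMod p) ^ m) ^ 2 = 1 := by
    rw [← pow_mul, mul_comm, pow_mul]; norm_num
  linear_combination ((-1 : ZMod p) ^ (m + 1) * 3) * hG' + 3 * hsq
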